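/- Let G be a countable connected network with distinct edge-lengths such that every G_t is locally finite, and suppose G has the uniqueness property: for every pair of vertices u, v, the graph G_{len(u,v)} has at most one infinite component. Define the minimal spanning forest F by: edge (v,w) ∈ F iff, with t = len(v,w), v and w lie in different components of G_t and at least one of those components is finite. Then an edge e = (v,w) belongs to F if and only if len(e) = perc(e), where perc(v,w) = inf{t : v, w in the same component of G_t}. -/

import Mathlib

open SimpleGraph

/-- The subgraph of `G` consisting of edges of length `< t`. -/
def Gt {V : Type*} (G : SimpleGraph V) (len : Sym2 V → ℝ) (t : ℝ) : SimpleGraph V where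
  Adj v w := G.Adj v w ∧ len s(v, w) < t
  symm := ⟨fun v w h => ⟨h.1.symm, by rw [Sym2.eq_swap]; exact h.2⟩⟩
  loopless := ⟨fun v h => G.loopless.irrefl v h.1⟩

/-- `perc(v,w)`: the infimum of `t` such that `v` and `w` lie in the same component of `G_t`. -/
noncomputable def perc {V : Type*} (G : SimpleGraph V) (len : Sym2 V → ℝ) (v w : V) : ℝ :=
  sInf {t | (Gt G len t).Reachable v w}

lemma Gt_mono {V : Type*} (G : SimpleGraph V) (len : Sym2 V → ℝ) {t t' : ℝ} (h : t ≤ t') :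
    Gt G len t ≤ Gt G len t' := fun _ _ ha => ⟨ha.1, ha.2.trans_le h⟩

/-- The minimal spanning forest of a countable network with distinct edge-lengths satisfying
the uniqueness property: an edge `(v,w)` is in the MSF iff `len(v,w) = perc(v,w)`. -/
theorem msf_perc_criterion {V : Type*} [Countable V]
    (G : SimpleGraph V) (len : Sym2 V → ℝ)
    (hdist : Set.InjOn len G.edgeSet)
    (hlocfin : ∀ t : ℝ, ∀ v : V, ((Gt G len t).neighborSet v).Finite)
    (huniq : ∀ u v : V, ∀ c c' : (Gt G len (len s(u, v))).ConnectedComponent,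
      c.supp.Infinite → c'.supp.Infinite → c = c')
    (F : Set (Sym2 V))
    (hF : ∀ v w : V, G.Adj v w →
      (s(v, w) ∈ F ↔
        (¬ (Gt G len (len s(v, w))).Reachable v w ∧
          (((Gt G len (len s(v, w))).connectedComponentMk v).supp.Finite ∨
           ((Gt G len (len s(v, w))).connectedComponentMk w).supp.Finite)))) :
    ∀ v w : V, G.Adj v w → (s(v, w) ∈ F ↔ len s(v, w) = perc G len v w) := by
  classical
  intro v w hvw
  set t₀ := len s(v, w) with ht₀
  have hne : v ≠ w := hvw.ne
  -- the reachability set is bounded below, by local finiteness at `v`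
  have hbdd : BddBelow {t | (Gt G len t).Reachable v w} := by
    set N : Finset V := (hlocfin t₀ v).toFinset with hN
    set Fs : Finset ℝ := N.image (fun u => len s(v, u)) with hFs
    refine ⟨if h : Fs.Nonempty then min t₀ (Fs.min' h) else t₀, ?_⟩
    intro t ht
    simp only [Set.mem_setOf_eq] at ht
    rcases le_or_gt t t₀ with hle | hlt
    · -- get a neighbor of `v` in `G_t`
      obtain ⟨p⟩ := ht
      cases p with
      | nil => exact absurd rfl hne
      | @cons _ u _ ha q =>
        have hu : u ∈ N := by
          simp only [hN, Set.Finite.mem_toFinset, mem_neighborSet]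
          exact ⟨ha.1, ha.2.trans_le hle⟩
        have hmem : len s(v, u) ∈ Fs := Finset.mem_image_of_mem _ hu
        have hFsne : Fs.Nonempty := ⟨_, hmem⟩
        rw [dif_pos hFsne]
        calc min t₀ (Fs.min' hFsne) ≤ Fs.min' hFsne := min_le_right _ _
          _ ≤ len s(v, u) := Fs.min'_le _ hmem
          _ ≤ t := le_of_lt ha.2
    · have : (if h : Fs.Nonempty then min t₀ (Fs.min' h) else t₀) ≤ t₀ := by
        split
        · exact min_le_left _ _
        · exact le_rfl
      exact this.trans hlt.le
  -- Reachability in `G_{t₀}` forces `perc < t₀`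
  have hkey : (Gt G len t₀).Reachable v w → perc G len v w < t₀ := by
    intro hr
    obtain ⟨p⟩ := hr
    set Ls : List ℝ := p.edges.map len with hLs
    set Fm : Finset ℝ := insert (t₀ - 1) Ls.toFinset with hFm
    have hFmne : Fm.Nonempty := ⟨t₀ - 1, Finset.mem_insert_self _ _⟩
    set m : ℝ := Fm.max' hFmne with hm
    have hmlt : m < t₀ := by
      rw [hm]
      apply Finset.max'_lt_iff Fm hFmne |>.mpr
      intro x hx
      rw [hFm, Finset.mem_insert, List.mem_toFinset] at hx
      rcases hx with rfl | hx
      · linarith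
      · obtain ⟨e, he, rfl⟩ := List.mem_map.mp hx
        have := p.edges_subset_edgeSet he
        induction e with
        | h a b => exact this.2
    set s : ℝ := (m + t₀) / 2 with hs
    have hms : m < s := by rw [hs]; linarith
    have hst : s < t₀ := by rw [hs]; linarith
    have hsub : ∀ e ∈ p.edges, e ∈ (Gt G len s).edgeSet := by
      intro e he
      have hadj := p.edges_subset_edgeSet he
      induction e with
      | h a b =>
        refine (Gt G len s).mem_edgeSet.mpr ⟨hadj.1, ?_⟩
        have hmem : len s(a, b) ∈ Fm := by
          rw [hFm, Finset.mem_insert, List.mem_toFinset]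
          exact Or.inr (List.mem_map_of_mem (f := len) he)
        exact lt_of_le_of_lt (Fm.le_max' _ hmem) hms
    have hsS : s ∈ {t | (Gt G len t).Reachable v w} := ⟨p.transfer _ hsub⟩
    exact lt_of_le_of_lt (csInf_le hbdd hsS) hst
  rw [hF v w hvw]
  constructor
  · rintro ⟨hnr, _⟩
    have hset : {t | (Gt G len t).Reachable v w} = Set.Ioi t₀ := by
      ext t
      simp only [Set.mem_setOf_eq, Set.mem_Ioi]
      constructor
      · intro h
        by_contra hle
        push_neg at hle
        exact hnr (h.mono (Gt_mono G len hle))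
      · intro h
        exact Adj.reachable ⟨hvw, h⟩
    rw [perc, hset, csInf_Ioi]
  · intro hpe
    have hnr : ¬ (Gt G len t₀).Reachable v w := by
      intro hr
      have := hkey hr
      rw [← hpe] at this
      exact lt_irrefl _ this
    refine ⟨hnr, ?_⟩
    by_contra hcon
    push_neg at hcon
    exact hnr (ConnectedComponent.eq.mp (huniq v w _ _ hcon.1 hcon.2))
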